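/- Let ψ ∈ Ω∞ and let κ ∈ 𝒦 have restricted growth with respect to ψ (κ ∈ R(ψ)). Then: (i) for every Banach limit L ∈ BL(ℝ₊) there exists a Banach limit L' ∈ BL(ℕ) such that f_{L,κ}(x) = f_{L',κ}(x) for all x ∈ M₊(ψ); and (ii) for every Banach limit L' ∈ BL(ℕ) there exists a Banach limit L ∈ BL(ℝ₊) such that f_{L,κ}(x) = f_{L',κ}(x) for all x ∈ M₊(ψ). -/

import Mathlib

open MeasureTheory Filter Set

noncomputable section

/-- `f` is bounded and continuous on `[0,∞)`, i.e. (the restriction of) `f`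
belongs to `C_b([0,∞))`. -/
def IsCb (f : ℝ → ℝ) : Prop :=
  ContinuousOn f (Ici 0) ∧ ∃ M : ℝ, ∀ t ∈ Ici (0:ℝ), |f t| ≤ M

/-- Bounded real sequences, i.e. elements of `ℓ∞(ℕ)`. -/
def IsBddSeq (a : ℕ → ℝ) : Prop := ∃ M : ℝ, ∀ n, |a n| ≤ M

/-- A Banach limit on `C_b([0,∞))`: a positive linear translation-invariant
functional with `L(1) = 1`.  (The underlying map is defined on all of `ℝ → ℝ`;
the axioms only refer to its values on bounded continuous functions on `[0,∞)`.) -/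
structure BanachLimitR where
  toFun : (ℝ → ℝ) → ℝ
  map_add : ∀ f g : ℝ → ℝ, IsCb f → IsCb g →
    toFun (fun t => f t + g t) = toFun f + toFun g
  map_smul : ∀ (c : ℝ) (f : ℝ → ℝ), IsCb f → toFun (fun t => c * f t) = c * toFun f
  pos : ∀ f : ℝ → ℝ, IsCb f → (∀ t ∈ Ici (0:ℝ), 0 ≤ f t) → 0 ≤ toFun f
  map_one : toFun (fun _ => 1) = 1
  shift_inv : ∀ f : ℝ → ℝ, IsCb f → ∀ s : ℝ, 0 ≤ s → toFun (fun t => f (t + s)) = toFun f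

/-- A Banach limit on `ℓ∞(ℕ)`: a positive linear shift-invariant functional
with `L'(1) = 1`. -/
structure BanachLimitN where
  toFun : (ℕ → ℝ) → ℝ
  map_add : ∀ a b : ℕ → ℝ, IsBddSeq a → IsBddSeq b →
    toFun (fun n => a n + b n) = toFun a + toFun b
  map_smul : ∀ (c : ℝ) (a : ℕ → ℝ), IsBddSeq a → toFun (fun n => c * a n) = c * toFun a
  pos : ∀ a : ℕ → ℝ, IsBddSeq a → (∀ n, 0 ≤ a n) → 0 ≤ toFun a
  map_one : toFun (fun _ => 1) = 1
  shift_inv : ∀ a : ℕ → ℝ, IsBddSeq a → toFun (fun n => a (n + 1)) = toFun a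

/-- An element of `SC_b^*([0,∞))`: a positive linear functional on `C_b([0,∞))`
with `γ(1) = 1` vanishing on `C₀([0,∞))`. -/
structure SCbStar where
  toFun : (ℝ → ℝ) → ℝ
  map_add : ∀ f g : ℝ → ℝ, IsCb f → IsCb g →
    toFun (fun t => f t + g t) = toFun f + toFun g
  map_smul : ∀ (c : ℝ) (f : ℝ → ℝ), IsCb f → toFun (fun t => c * f t) = c * toFun f
  pos : ∀ f : ℝ → ℝ, IsCb f → (∀ t ∈ Ici (0:ℝ), 0 ≤ f t) → 0 ≤ toFun f
  map_one : toFun (fun _ => 1) = 1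
  vanish : ∀ f : ℝ → ℝ, IsCb f → Tendsto f atTop (nhds 0) → toFun f = 0

/-- A positive linear functional on `C_b([0,∞))`. -/
structure PosLinFunc where
  toFun : (ℝ → ℝ) → ℝ
  map_add : ∀ f g : ℝ → ℝ, IsCb f → IsCb g →
    toFun (fun t => f t + g t) = toFun f + toFun g
  map_smul : ∀ (c : ℝ) (f : ℝ → ℝ), IsCb f → toFun (fun t => c * f t) = c * toFun f
  pos : ∀ f : ℝ → ℝ, IsCb f → (∀ t ∈ Ici (0:ℝ), 0 ≤ f t) → 0 ≤ toFun f

/-- `ψ ∈ Ω_∞`: concave on `[0,∞)`, nonnegative, `ψ(t) → 0` as `t → 0⁺` and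
`ψ(t) → ∞` as `t → ∞`. -/
def OmegaInf (ψ : ℝ → ℝ) : Prop :=
  ConcaveOn ℝ (Ici 0) ψ ∧ (∀ t ∈ Ici (0:ℝ), 0 ≤ ψ t) ∧
    Tendsto ψ (nhdsWithin 0 (Ioi 0)) (nhds 0) ∧ Tendsto ψ atTop atTop

/-- The decreasing rearrangement `x*` of a measurable function `x` on `[0,∞)`. -/
def decRearr (x : ℝ → ℝ) (t : ℝ) : ℝ :=
  sInf {s : ℝ | 0 ≤ s ∧ volume {u : ℝ | 0 ≤ u ∧ s < |x u|} ≤ ENNReal.ofReal t}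

/-- The weighted mean function `φ(x)(t) = (1/ψ(t)) ∫₀ᵗ x*(s) ds`. -/
def phiW (ψ x : ℝ → ℝ) (t : ℝ) : ℝ := (∫ s in (0:ℝ)..t, decRearr x s) / ψ t

/-- Membership in the Marcinkiewicz space `M(ψ)`. -/
def MemM (ψ x : ℝ → ℝ) : Prop :=
  Measurable x ∧ ∃ M : ℝ, ∀ t > (0:ℝ), phiW ψ x t ≤ M

/-- Membership in the positive cone `M₊(ψ)`. -/
def MemMplus (ψ x : ℝ → ℝ) : Prop := MemM ψ x ∧ ∀ t ∈ Ici (0:ℝ), 0 ≤ x t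

/-- The Marcinkiewicz norm `‖x‖_{M(ψ)} = sup_{t>0} φ(x)(t)`. -/
def MNorm (ψ x : ℝ → ℝ) : ℝ := ⨆ t > (0:ℝ), phiW ψ x t

/-- `κ ∈ 𝒦`: strictly increasing, invertible (as a map of `[0,∞)` onto itself),
differentiable, unbounded, with `κ(0) = 0`. -/
def MemK (κ : ℝ → ℝ) : Prop :=
  StrictMonoOn κ (Ici 0) ∧ κ 0 = 0 ∧ MapsTo κ (Ici 0) (Ici 0) ∧
    SurjOn κ (Ici 0) (Ici 0) ∧ DifferentiableOn ℝ κ (Ici 0) ∧ Tendsto κ atTop atTop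

/-- `f_{L,κ}(x) = L(φ_κ(x))` for a Banach limit `L` on `C_b([0,∞))`; the function
`φ_κ(x)`, bounded and continuous on `(0,∞)`, is fed to `L` as `t ↦ φ_κ(x)(max t 1)`. -/
def fL (L : BanachLimitR) (ψ κ x : ℝ → ℝ) : ℝ :=
  L.toFun fun t => phiW ψ x (κ (max t 1))

/-- `f_{L',κ}(x) = L'({φ(x)(κ(n))}ₙ)` for a Banach limit `L'` on `ℓ∞(ℕ)`. -/
def fLN (L' : BanachLimitN) (ψ κ x : ℝ → ℝ) : ℝ :=
  L'.toFun fun n => phiW ψ x (κ n)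

/-- `κ` has restricted growth with respect to `ψ` (`κ ∈ R(ψ)`): the sequence
`ψ(κ(n))/ψ(κ(n+1))` is almost convergent to `1`. -/
def RestrictedGrowth (ψ κ : ℝ → ℝ) : Prop :=
  ∀ L' : BanachLimitN, L'.toFun (fun n => ψ (κ n) / ψ (κ ((n:ℝ) + 1))) = 1

/-- `κ` has dominated growth with respect to `ψ` (`κ ∈ D(ψ)`):
`(ψ∘κ)'(t)/(ψ∘κ)(t) < C/t` for some `C > 0` and all `t > 0`. -/
def DominatedGrowth (ψ κ : ℝ → ℝ) : Prop :=
  (∀ t > (0:ℝ), DifferentiableAt ℝ (fun u => ψ (κ u)) t) ∧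
    ∃ C > (0:ℝ), ∀ t > (0:ℝ), deriv (fun u => ψ (κ u)) t / ψ (κ t) < C / t

/-- `κ` is of exponential increase: `κ(t + C) > 2κ(t)` for some `C > 0` and all `t > 0`. -/
def ExpIncrease (κ : ℝ → ℝ) : Prop := ∃ C > (0:ℝ), ∀ t > (0:ℝ), 2 * κ t < κ (t + C)

/-- The piecewise linear extension map `p : ℓ∞(ℕ) → C_b([0,∞))`. -/
def plExt (a : ℕ → ℝ) (t : ℝ) : ℝ :=
  a ⌊t⌋₊ + (a (⌊t⌋₊ + 1) - a ⌊t⌋₊) * (t - (⌊t⌋₊ : ℝ))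

/-- The Cesàro mean `C(g)(μ) = (1/μ) ∫₀^μ g(s) ds` (with `C(g)(0) := g(0)`). -/
def cesaro (g : ℝ → ℝ) (μ : ℝ) : ℝ :=
  if μ = 0 then g 0 else (∫ s in (0:ℝ)..μ, g s) / μ

/-- `M_k(g)(λ) = (1/k(λ)) ∫₀^λ g(s) k'(s) ds` (with `M_k(g)(0) := g(0)`). -/
def MkFun (k g : ℝ → ℝ) (l : ℝ) : ℝ :=
  if l = 0 then g 0 else (∫ s in (0:ℝ)..l, g s * deriv k s) / k l

/-- The Connes-Dixmier functional `τ_{γ,k}(x) = γ(M_k(φ(x)))`; the function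
`M_k(φ(x))`, bounded and continuous on `(0,∞)`, is fed to `γ` as `t ↦ M_k(φ(x))(max t 1)`. -/
def tauCD (γ : SCbStar) (ψ k x : ℝ → ℝ) : ℝ :=
  γ.toFun fun t => MkFun k (phiW ψ x) (max t 1)

/-- A set `Λ` of Banach limits has the Cesàro limit property if for each
`g ∈ C_b([0,∞))` both `liminf C(g)` and `limsup C(g)` are attained as values `L(g)`, `L ∈ Λ`. -/
def CesaroLimitProp (Λ : Set BanachLimitR) : Prop :=
  ∀ g : ℝ → ℝ, IsCb g →
    (∃ L ∈ Λ, L.toFun g = liminf (cesaro g) atTop) ∧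
    (∃ L ∈ Λ, L.toFun g = limsup (cesaro g) atTop)

/-- Dilation invariance of an element of `SC_b^*([0,∞))`. -/
def DilationInvariant (ω : SCbStar) : Prop :=
  ∀ g : ℝ → ℝ, IsCb g → ∀ a : ℝ, 0 < a → ω.toFun (fun t => g (a * t)) = ω.toFun g

/-! ### Auxiliary lemmas -/

lemma IsCb.add' {f g : ℝ → ℝ} (hf : IsCb f) (hg : IsCb g) : IsCb (fun t => f t + g t) := by
  obtain ⟨hfc, Mf, hMf⟩ := hf
  obtain ⟨hgc, Mg, hMg⟩ := hg
  exact ⟨hfc.add hgc, Mf + Mg, fun t ht => (abs_add_le _ _).trans (add_le_add (hMf t ht) (hMg t ht))⟩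

lemma IsCb.sub' {f g : ℝ → ℝ} (hf : IsCb f) (hg : IsCb g) : IsCb (fun t => f t - g t) := by
  obtain ⟨hfc, Mf, hMf⟩ := hf
  obtain ⟨hgc, Mg, hMg⟩ := hg
  refine ⟨hfc.sub hgc, Mf + Mg, fun t ht => (abs_sub _ _).trans (add_le_add (hMf t ht) (hMg t ht))⟩

lemma IsCb.const (c : ℝ) : IsCb (fun _ => c) :=
  ⟨continuousOn_const, |c|, fun _ _ => le_rfl⟩

lemma IsCb.cmul {f : ℝ → ℝ} (c : ℝ) (hf : IsCb f) : IsCb (fun t => c * f t) := by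
  obtain ⟨hfc, Mf, hMf⟩ := hf
  refine ⟨continuousOn_const.mul hfc, |c| * Mf, fun t ht => ?_⟩
  rw [abs_mul]
  exact mul_le_mul_of_nonneg_left (hMf t ht) (abs_nonneg c)

lemma IsCb.shift {f : ℝ → ℝ} (hf : IsCb f) {s : ℝ} (hs : 0 ≤ s) :
    IsCb (fun t => f (t + s)) := by
  obtain ⟨hfc, Mf, hMf⟩ := hf
  refine ⟨hfc.comp (continuous_id.add continuous_const).continuousOn
    (fun t ht => by simpa using add_nonneg ht hs), Mf, fun t ht => hMf _ (add_nonneg ht hs)⟩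

namespace BanachLimitR

variable (L : BanachLimitR)

lemma map_const (c : ℝ) : L.toFun (fun _ => c) = c := by
  have h := L.map_smul c (fun _ => 1) (IsCb.const 1)
  simpa [L.map_one] using h

lemma map_mono {f g : ℝ → ℝ} (hf : IsCb f) (hg : IsCb g)
    (h : ∀ t ∈ Ici (0:ℝ), f t ≤ g t) : L.toFun f ≤ L.toFun g := by
  have h2 : L.toFun g = L.toFun f + L.toFun (fun t => g t - f t) := by
    have h2' := L.map_add f (fun t => g t - f t) hf (hg.sub' hf)
    rwa [show (fun t => f t + (g t - f t)) = g from by funext t; ring] at h2' 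
  have h3 : 0 ≤ L.toFun (fun t => g t - f t) :=
    L.pos _ (hg.sub' hf) (fun t ht => sub_nonneg.2 (h t ht))
  linarith

lemma absLe {f : ℝ → ℝ} (hf : IsCb f) {M : ℝ} (h : ∀ t ∈ Ici (0:ℝ), |f t| ≤ M) :
    |L.toFun f| ≤ M := by
  have h1 : L.toFun f ≤ M := by
    have := L.map_mono hf (IsCb.const M) (fun t ht => (_root_.abs_le.1 (h t ht)).2)
    simpa [L.map_const] using this
  have h2 : -M ≤ L.toFun f := by
    have := L.map_mono (IsCb.const (-M)) hf (fun t ht => (_root_.abs_le.1 (h t ht)).1)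
    simpa [L.map_const] using this
  rw [_root_.abs_le]; exact ⟨h2, h1⟩

lemma congr_Ici {f g : ℝ → ℝ} (hf : IsCb f) (hg : IsCb g)
    (h : ∀ t ∈ Ici (0:ℝ), f t = g t) : L.toFun f = L.toFun g :=
  le_antisymm (L.map_mono hf hg fun t ht => (h t ht).le)
    (L.map_mono hg hf fun t ht => (h t ht).ge)

lemma map_vanish {f : ℝ → ℝ} (hf : IsCb f) (h : Tendsto f atTop (nhds 0)) :
    L.toFun f = 0 := by
  have key : ∀ ε > (0:ℝ), |L.toFun f| ≤ ε := by
    intro ε hε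
    obtain ⟨s, hs⟩ := (Metric.tendsto_atTop.1 h ε hε)
    set s' := max s 0 with hs'
    have h1 : L.toFun (fun t => f (t + s')) = L.toFun f :=
      L.shift_inv f hf s' (le_max_right _ _)
    rw [← h1]
    refine L.absLe (hf.shift (le_max_right _ _)) (fun t ht => ?_)
    have := hs (t + s') (le_trans (le_max_left _ _) (le_add_of_nonneg_left ht))
    rw [Real.dist_eq, sub_zero] at this
    exact this.le
  by_contra hne
  have : 0 < |L.toFun f| := abs_pos.2 hne
  linarith [key (|L.toFun f| / 2) (by linarith)]

lemma close {f g h : ℝ → ℝ} (hf : IsCb f) (hg : IsCb g) (hh : IsCb h)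
    (hbd : ∀ t ∈ Ici (0:ℝ), |f t - g t| ≤ h t) :
    |L.toFun f - L.toFun g| ≤ L.toFun h := by
  have h1 : L.toFun f ≤ L.toFun g + L.toFun h := by
    have : L.toFun f ≤ L.toFun (fun t => g t + h t) :=
      L.map_mono hf (hg.add' hh) (fun t ht => by
        have := (_root_.abs_le.1 (hbd t ht)).2; linarith)
    rwa [L.map_add g h hg hh] at this
  have h2 : L.toFun g ≤ L.toFun f + L.toFun h := by
    have : L.toFun g ≤ L.toFun (fun t => f t + h t) :=
      L.map_mono hg (hf.add' hh) (fun t ht => by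
        have := (_root_.abs_le.1 (hbd t ht)).1; linarith)
    rwa [L.map_add f h hf hh] at this
  rw [_root_.abs_le]; constructor <;> linarith

end BanachLimitR

lemma IsBddSeq.add' {a b : ℕ → ℝ} (ha : IsBddSeq a) (hb : IsBddSeq b) :
    IsBddSeq (fun n => a n + b n) := by
  obtain ⟨Ma, hMa⟩ := ha; obtain ⟨Mb, hMb⟩ := hb
  exact ⟨Ma + Mb, fun n => (abs_add_le _ _).trans (add_le_add (hMa n) (hMb n))⟩

lemma IsBddSeq.sub' {a b : ℕ → ℝ} (ha : IsBddSeq a) (hb : IsBddSeq b) :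
    IsBddSeq (fun n => a n - b n) := by
  obtain ⟨Ma, hMa⟩ := ha; obtain ⟨Mb, hMb⟩ := hb
  exact ⟨Ma + Mb, fun n => (abs_sub _ _).trans (add_le_add (hMa n) (hMb n))⟩

lemma IsBddSeq.const (c : ℝ) : IsBddSeq (fun _ => c) := ⟨|c|, fun _ => le_rfl⟩

lemma IsBddSeq.cmul {a : ℕ → ℝ} (c : ℝ) (ha : IsBddSeq a) : IsBddSeq (fun n => c * a n) := by
  obtain ⟨Ma, hMa⟩ := ha
  refine ⟨|c| * Ma, fun n => ?_⟩
  rw [abs_mul]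
  exact mul_le_mul_of_nonneg_left (hMa n) (abs_nonneg c)

lemma IsBddSeq.shift {a : ℕ → ℝ} (ha : IsBddSeq a) (k : ℕ) : IsBddSeq (fun n => a (n + k)) := by
  obtain ⟨Ma, hMa⟩ := ha; exact ⟨Ma, fun n => hMa (n + k)⟩

namespace BanachLimitN

variable (L : BanachLimitN)

lemma map_const (c : ℝ) : L.toFun (fun _ => c) = c := by
  have h := L.map_smul c (fun _ => 1) (IsBddSeq.const 1)
  simpa [L.map_one] using h

lemma map_mono {a b : ℕ → ℝ} (ha : IsBddSeq a) (hb : IsBddSeq b)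
    (h : ∀ n, a n ≤ b n) : L.toFun a ≤ L.toFun b := by
  have h2 : L.toFun b = L.toFun a + L.toFun (fun n => b n - a n) := by
    have h2' := L.map_add a (fun n => b n - a n) ha (hb.sub' ha)
    rwa [show (fun n => a n + (b n - a n)) = b from by funext n; ring] at h2' 
  have h3 : 0 ≤ L.toFun (fun n => b n - a n) :=
    L.pos _ (hb.sub' ha) (fun n => sub_nonneg.2 (h n))
  linarith

lemma absLe {a : ℕ → ℝ} (ha : IsBddSeq a) {M : ℝ} (h : ∀ n, |a n| ≤ M) :
    |L.toFun a| ≤ M := by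
  have h1 : L.toFun a ≤ M := by
    have := L.map_mono ha (IsBddSeq.const M) (fun n => (_root_.abs_le.1 (h n)).2)
    simpa [L.map_const] using this
  have h2 : -M ≤ L.toFun a := by
    have := L.map_mono (IsBddSeq.const (-M)) ha (fun n => (_root_.abs_le.1 (h n)).1)
    simpa [L.map_const] using this
  rw [_root_.abs_le]; exact ⟨h2, h1⟩

lemma shift_invN {a : ℕ → ℝ} (ha : IsBddSeq a) (k : ℕ) :
    L.toFun (fun n => a (n + k)) = L.toFun a := by
  induction k with
  | zero => simp
  | succ k ih =>
    have h1 : L.toFun (fun n => (fun m => a (m + k)) (n + 1)) = L.toFun (fun n => a (n + k)) :=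
      L.shift_inv _ (ha.shift k)
    have h2 : (fun n => (fun m => a (m + k)) (n + 1)) = fun n => a (n + (k + 1)) := by
      funext n; congr 1; ring
    rw [h2] at h1; rw [h1, ih]

lemma map_null {a : ℕ → ℝ} (ha : IsBddSeq a) (h : Tendsto a atTop (nhds 0)) :
    L.toFun a = 0 := by
  have key : ∀ ε > (0:ℝ), |L.toFun a| ≤ ε := by
    intro ε hε
    obtain ⟨N, hN⟩ := (Metric.tendsto_atTop.1 h ε hε)
    rw [← L.shift_invN ha N]
    refine L.absLe (ha.shift N) (fun n => ?_)
    have := hN (n + N) (Nat.le_add_left _ _)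
    rw [Real.dist_eq, sub_zero] at this
    exact this.le
  by_contra hne
  have : 0 < |L.toFun a| := abs_pos.2 hne
  linarith [key (|L.toFun a| / 2) (by linarith)]

lemma close {a b c : ℕ → ℝ} (ha : IsBddSeq a) (hb : IsBddSeq b) (hc : IsBddSeq c)
    (hbd : ∀ n, |a n - b n| ≤ c n) :
    |L.toFun a - L.toFun b| ≤ L.toFun c := by
  have h1 : L.toFun a ≤ L.toFun b + L.toFun c := by
    have : L.toFun a ≤ L.toFun (fun n => b n + c n) :=
      L.map_mono ha (hb.add' hc) (fun n => by have := (_root_.abs_le.1 (hbd n)).2; linarith)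
    rwa [L.map_add b c hb hc] at this
  have h2 : L.toFun b ≤ L.toFun a + L.toFun c := by
    have : L.toFun b ≤ L.toFun (fun n => a n + c n) :=
      L.map_mono hb (ha.add' hc) (fun n => by have := (_root_.abs_le.1 (hbd n)).1; linarith)
    rwa [L.map_add a c ha hc] at this
  rw [_root_.abs_le]; constructor <;> linarith

lemma map_shift_sub {g : ℕ → ℝ} (hg : IsBddSeq g) :
    L.toFun (fun n => g (n + 1) - g n) = 0 := by
  have h1 : L.toFun (fun n => g (n + 1) + (-1) * g n)
      = L.toFun (fun n => g (n + 1)) + L.toFun (fun n => (-1) * g n) :=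
    L.map_add _ _ (hg.shift 1) (hg.cmul (-1))
  have h2 : L.toFun (fun n => (-1) * g n) = (-1) * L.toFun g := L.map_smul (-1) g hg
  have h3 : L.toFun (fun n => g (n + 1)) = L.toFun g := L.shift_inv g hg
  have h4 : (fun n => g (n + 1) - g n) = fun n => g (n + 1) + (-1) * g n := by
    funext n; ring
  rw [h4, h1, h2, h3]; ring

end BanachLimitN
section PsiFacts

variable {ψ : ℝ → ℝ} (hψ : OmegaInf ψ)
include hψ

lemma psi_mono : ∀ ⦃u v : ℝ⦄, 0 ≤ u → u ≤ v → ψ u ≤ ψ v := by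
  intro u v hu huv
  by_contra hlt
  push_neg at hlt
  have huv' : u < v := by
    rcases eq_or_lt_of_le huv with h | h
    · exact absurd (h ▸ rfl) (ne_of_gt hlt)
    · exact h
  have key : ∀ w, v < w → ψ w < ψ v := by
    intro w hw
    set l := (w - v) / (w - u) with hl
    have hwu : 0 < w - u := by linarith
    have hl0 : 0 < l := div_pos (by linarith) hwu
    have hl1 : l < 1 := (div_lt_one hwu).2 (by linarith)
    have hcomb : l • u + (1 - l) • w = v := by
      simp only [smul_eq_mul, hl]
      field_simp
      ring
    have hconc := hψ.1.2 (Set.mem_Ici.2 hu) (Set.mem_Ici.2 (by linarith : (0:ℝ) ≤ w))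
      hl0.le (show (0:ℝ) ≤ 1 - l by linarith) (show l + (1 - l) = 1 by ring)
    rw [hcomb] at hconc
    simp only [smul_eq_mul] at hconc
    nlinarith
  obtain ⟨w, hw1, hw2⟩ := ((hψ.2.2.2.eventually_ge_atTop (ψ v + 1)).and
    (eventually_gt_atTop v)).exists
  have := key w hw2
  linarith

lemma psi_pos : ∀ ⦃t : ℝ⦄, 0 < t → 0 < ψ t := by
  intro t ht
  obtain ⟨w, hw1, hw2⟩ := ((hψ.2.2.2.eventually_ge_atTop 1).and (eventually_gt_atTop t)).exists
  set l := (w - t) / w with hl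
  have hw0 : 0 < w := by linarith
  have hl0 : 0 ≤ l := div_nonneg (by linarith) hw0.le
  have hl1 : 1 - l = t / w := by rw [hl, eq_div_iff hw0.ne', sub_mul, div_mul_cancel₀ _ hw0.ne']; ring
  have hcomb : l • (0:ℝ) + (1 - l) • w = t := by
    simp only [smul_eq_mul, hl1]
    field_simp
    ring
  have hconc := hψ.1.2 (Set.mem_Ici.2 (le_refl (0:ℝ))) (Set.mem_Ici.2 hw0.le)
    hl0 (show (0:ℝ) ≤ 1 - l by rw [hl1]; positivity) (show l + (1 - l) = 1 by ring)
  rw [hcomb] at hconc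
  simp only [smul_eq_mul] at hconc
  have h0 : 0 ≤ ψ 0 := hψ.2.1 0 (Set.mem_Ici.2 le_rfl)
  have htw : 0 < t / w := div_pos ht hw0
  nlinarith

lemma psi_contOn : ContinuousOn ψ (Ioi 0) := by
  have := hψ.1.continuousOn_interior
  rwa [interior_Ici] at this

end PsiFacts
/-! ### decreasing rearrangement and its primitive -/

def drSet (x : ℝ → ℝ) (t : ℝ) : Set ℝ :=
  {s : ℝ | 0 ≤ s ∧ volume {u : ℝ | 0 ≤ u ∧ s < |x u|} ≤ ENNReal.ofReal t}

lemma decRearr_eq_sInf (x : ℝ → ℝ) (t : ℝ) : decRearr x t = sInf (drSet x t) := rfl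

lemma drSet_mono (x : ℝ → ℝ) {t t' : ℝ} (h : t ≤ t') : drSet x t ⊆ drSet x t' :=
  fun s hs => ⟨hs.1, hs.2.trans (ENNReal.ofReal_le_ofReal h)⟩

lemma drSet_bddBelow (x : ℝ → ℝ) (t : ℝ) : BddBelow (drSet x t) :=
  ⟨0, fun s hs => hs.1⟩

lemma decRearr_nonneg (x : ℝ → ℝ) (t : ℝ) : 0 ≤ decRearr x t :=
  Real.sInf_nonneg fun _ hs => hs.1

lemma decRearr_antitoneOn (x : ℝ → ℝ) {σ : ℝ} (h : (drSet x σ).Nonempty) :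
    AntitoneOn (decRearr x) (Ici σ) := by
  intro u hu v hv huv
  exact csInf_le_csInf (drSet_bddBelow x v)
    (h.mono (drSet_mono x hu)) (drSet_mono x huv)

/-- The primitive `I(t) = ∫₀ᵗ x*(s) ds`. -/
def IInt (x : ℝ → ℝ) (t : ℝ) : ℝ := ∫ s in (0:ℝ)..t, decRearr x s

lemma IInt_nonneg (x : ℝ → ℝ) {t : ℝ} (ht : 0 ≤ t) : 0 ≤ IInt x t :=
  intervalIntegral.integral_nonneg ht (fun u _ => decRearr_nonneg x u)

lemma IInt_zero (x : ℝ → ℝ) : IInt x 0 = 0 := intervalIntegral.integral_same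

lemma drSet_zero_of_forall (x : ℝ → ℝ) {s : ℝ} (hs : 0 < s)
    (h3 : ∀ σ : ℝ, 0 ≤ σ → σ < s → ¬ (drSet x σ).Nonempty) :
    ∀ u, u < s → decRearr x u = 0 := by
  intro u hu
  have hemp : ¬ (drSet x u).Nonempty := by
    intro hne
    rcases lt_or_ge u 0 with h4 | h4
    · exact h3 0 le_rfl hs (hne.mono (drSet_mono x h4.le)) |>.elim
    · exact h3 u h4 hu hne
  rw [Set.not_nonempty_iff_eq_empty] at hemp
  rw [decRearr_eq_sInf, hemp]
  exact Real.sInf_empty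

lemma IInt_eq_zero_of_flat (x : ℝ → ℝ) {s : ℝ} (hs : 0 ≤ s)
    (hzero : ∀ u, u < s → decRearr x u = 0) : IInt x s = 0 := by
  have hae : ∀ᵐ u ∂(volume : Measure ℝ), u ∈ uIoc 0 s → decRearr x u = 0 := by
    have h0 : (volume : Measure ℝ) {s} = 0 := measure_singleton s
    filter_upwards [compl_mem_ae_iff.2 h0] with u hu hu2
    have hne : u ≠ s := hu
    rw [uIoc_of_le hs] at hu2
    exact hzero u (lt_of_le_of_ne hu2.2 hne)
  calc IInt x s = ∫ u in (0:ℝ)..s, (0:ℝ) := intervalIntegral.integral_congr_ae hae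
    _ = 0 := intervalIntegral.integral_zero

lemma IInt_monoOn (x : ℝ → ℝ) : MonotoneOn (IInt x) (Ici 0) := by
  intro s hs t ht hst
  simp only [mem_Ici] at hs ht
  by_cases hInt : IntervalIntegrable (decRearr x) volume 0 t
  · have h1 : IntervalIntegrable (decRearr x) volume 0 s :=
      hInt.mono_set (by rw [uIcc_of_le hs, uIcc_of_le ht]; exact Icc_subset_Icc le_rfl hst)
    have h2 : IntervalIntegrable (decRearr x) volume s t :=
      hInt.mono_set (by rw [uIcc_of_le hst, uIcc_of_le ht]; exact Icc_subset_Icc hs le_rfl)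
    have h3 : IInt x s + ∫ u in s..t, decRearr x u = IInt x t :=
      intervalIntegral.integral_add_adjacent_intervals h1 h2
    have h4 : 0 ≤ ∫ u in s..t, decRearr x u :=
      intervalIntegral.integral_nonneg hst (fun u _ => decRearr_nonneg x u)
    linarith [h3]
  · have ht0 : IInt x t = 0 := intervalIntegral.integral_undef hInt
    have hs0 : IInt x s = 0 := by
      by_cases h2 : IntervalIntegrable (decRearr x) volume 0 s
      · by_cases h3 : ∃ σ, 0 ≤ σ ∧ σ < s ∧ (drSet x σ).Nonempty
        · exfalso
          obtain ⟨σ, hσ0, hσs, hσne⟩ := h3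
          have hanti : AntitoneOn (decRearr x) (uIcc s t) := by
            refine (decRearr_antitoneOn x hσne).mono ?_
            rw [uIcc_of_le hst]
            exact fun u hu => le_trans hσs.le hu.1
          exact hInt (h2.trans hanti.intervalIntegrable)
        · push_neg at h3
          rcases eq_or_lt_of_le hs with hs' | hs'
          · rw [← hs']; exact IInt_zero x
          exact IInt_eq_zero_of_flat x hs (drSet_zero_of_forall x hs' 
            (fun σ h1' h2' => (Set.not_nonempty_iff_eq_empty).2 (by
              rcases Set.eq_empty_or_nonempty (drSet x σ) with h | h
              · exact h
              · exact absurd h (by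
                  intro hcon
                  exact absurd hcon (by
                    have := h3 σ h1' h2'
                    rw [← Set.not_nonempty_iff_eq_empty] at this
                    exact this)))))
      · exact intervalIntegral.integral_undef h2
    rw [hs0, ht0]
lemma IInt_continuousAt (x : ℝ → ℝ) {t₀ : ℝ} (ht₀ : 0 < t₀) :
    ContinuousAt (IInt x) t₀ := by
  by_cases h2 : ∃ u, t₀ < u ∧ IntervalIntegrable (decRearr x) volume 0 u
  · obtain ⟨u, hu, hint⟩ := h2
    have hcont : ContinuousOn (fun b => ∫ v in (0:ℝ)..b, decRearr x v) (uIcc 0 u) :=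
      intervalIntegral.continuousOn_primitive_interval' hint left_mem_uIcc
    rw [uIcc_of_le (le_trans ht₀.le hu.le)] at hcont
    exact hcont.continuousAt (Icc_mem_nhds ht₀ hu)
  · push_neg at h2
    by_cases h3 : ∃ σ, 0 ≤ σ ∧ σ < t₀ ∧ (drSet x σ).Nonempty
    · obtain ⟨σ, hσ0, hσt, hσne⟩ := h3
      set σ' := (σ + t₀) / 2 with hσ'
      have hσ'1 : σ < σ' := by rw [hσ']; linarith
      have hσ'2 : σ' < t₀ := by rw [hσ']; linarith
      have hσ'0 : 0 ≤ σ' := le_trans hσ0 hσ'1.le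
      have hni : ¬ IntervalIntegrable (decRearr x) volume 0 σ' := by
        intro hcon
        have hanti : AntitoneOn (decRearr x) (uIcc σ' (t₀ + 1)) := by
          refine (decRearr_antitoneOn x hσne).mono ?_
          rw [uIcc_of_le (by linarith)]
          exact fun v hv => le_trans hσ'1.le hv.1
        exact h2 (t₀ + 1) (by linarith) (hcon.trans hanti.intervalIntegrable)
      have hzero : ∀ v, σ' < v → IInt x v = 0 := by
        intro v hv
        refine intervalIntegral.integral_undef (fun hcon => hni ?_)
        refine hcon.mono_set ?_
        rw [uIcc_of_le hσ'0, uIcc_of_le (le_trans hσ'0 hv.le)]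
        exact Icc_subset_Icc le_rfl hv.le
      have : (fun _ : ℝ => (0:ℝ)) =ᶠ[nhds t₀] IInt x := by
        filter_upwards [Ioi_mem_nhds hσ'2] with v hv
        exact (hzero v hv).symm
      exact continuousAt_const.congr this
    · push_neg at h3
      have hzero : ∀ u, u < t₀ → decRearr x u = 0 :=
        drSet_zero_of_forall x ht₀ (fun σ h1' h2' hne => by rw [h3 σ h1' h2'] at hne; exact Set.not_nonempty_empty hne)
      have hIflat : ∀ v ∈ Ioi (0:ℝ), IInt x v = 0 := by
        intro v hv
        rcases lt_trichotomy v t₀ with h | h | h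
        · have : ∀ u ∈ uIcc 0 v, decRearr x u = 0 := by
            intro u hu
            rw [uIcc_of_le (le_of_lt hv)] at hu
            exact hzero u (lt_of_le_of_lt hu.2 h)
          calc IInt x v = ∫ u in (0:ℝ)..v, (0:ℝ) := intervalIntegral.integral_congr this
            _ = 0 := intervalIntegral.integral_zero
        · rw [h]; exact IInt_eq_zero_of_flat x ht₀.le hzero
        · exact intervalIntegral.integral_undef (h2 v h)
      have : (fun _ : ℝ => (0:ℝ)) =ᶠ[nhds t₀] IInt x := by
        filter_upwards [Ioi_mem_nhds ht₀] with v hv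
        exact (hIflat v hv).symm
      exact continuousAt_const.congr this
lemma phiW_eq (ψ x : ℝ → ℝ) (t : ℝ) : phiW ψ x t = IInt x t / ψ t := rfl

lemma phiW_zero (ψ x : ℝ → ℝ) : phiW ψ x 0 = 0 := by
  rw [phiW_eq, IInt_zero, zero_div]

lemma phiW_nonneg {ψ : ℝ → ℝ} (hψ : OmegaInf ψ) (x : ℝ → ℝ) {t : ℝ} (ht : 0 ≤ t) :
    0 ≤ phiW ψ x t :=
  div_nonneg (IInt_nonneg x ht) (hψ.2.1 t ht)

section KappaFacts

variable {κ : ℝ → ℝ} (hκ : MemK κ)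
include hκ

lemma kappa_nonneg {t : ℝ} (ht : 0 ≤ t) : 0 ≤ κ t := hκ.2.2.1 ht

lemma kappa_pos {t : ℝ} (ht : 0 < t) : 0 < κ t := by
  have := hκ.1 (self_mem_Ici) (mem_Ici.2 ht.le) ht
  rwa [hκ.2.1] at this

lemma kappa_monoOn : MonotoneOn κ (Ici 0) := hκ.1.monotoneOn

lemma kappa_contOn : ContinuousOn κ (Ici 0) := hκ.2.2.2.2.1.continuousOn

end KappaFacts

set_option maxHeartbeats 1000000 in
/-- The central arithmetic inequality. -/
lemma key_ineq {Ip Iu Iq ψp ψu ψq B θ : ℝ}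
    (hψp : 0 < ψp) (hψpu : ψp ≤ ψu) (hψuq : ψu ≤ ψq)
    (hIp : 0 ≤ Ip) (hIpu : Ip ≤ Iu) (hIuq : Iu ≤ Iq)
    (haB : Ip / ψp ≤ B) (hbB : Iq / ψq ≤ B) (huB : Iu / ψu ≤ B) (hB0 : 0 ≤ B)
    (hθ0 : 0 ≤ θ) (hθ1 : θ ≤ 1) :
    |Iu / ψu - (Ip / ψp + (Iq / ψq - Ip / ψp) * θ)|
      ≤ (Iq / ψq - Ip / ψp) + 4 * B * (1 - ψp / ψq) := by
  have hψu : 0 < ψu := lt_of_lt_of_le hψp hψpu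
  have hψq : 0 < ψq := lt_of_lt_of_le hψu hψuq
  set A := Ip / ψp with hA
  set C := Iq / ψq with hC
  set φ := Iu / ψu with hφ
  set r := ψp / ψq with hr
  set δ := 1 - r with hδ
  have hr0 : 0 < r := div_pos hψp hψq
  have hr1 : r ≤ 1 := (div_le_one hψq).2 (hψpu.trans hψuq)
  have hδ0 : 0 ≤ δ := by rw [hδ]; linarith
  have hA0 : 0 ≤ A := div_nonneg hIp hψp.le
  have hC0 : 0 ≤ C := div_nonneg (hIp.trans (hIpu.trans hIuq)) hψq.le
  have hφ0 : 0 ≤ φ := div_nonneg (hIp.trans hIpu) hψu.le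
  have f1 : φ ≤ Iq / ψp := div_le_div₀ (by linarith) hIuq hψp hψpu
  have f2 : Ip / ψq ≤ φ := div_le_div₀ (by linarith) hIpu hψu hψuq
  have f3 : Iq / ψp = C / r := by
    rw [hC, hr]
    field_simp
  have f4 : Ip / ψq = A * r := by
    rw [hA, hr]
    field_simp
  have f5 : A * r ≤ C := by
    rw [← f4, hC]
    exact div_le_div₀ (by linarith) (hIpu.trans hIuq) hψq le_rfl
  have hCr : φ * r ≤ C := by
    have := f1.trans_eq f3
    exact (le_div_iff₀ hr0).1 this
  have hAr : A * r ≤ φ := f4 ▸ f2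
  have hub : φ ≤ C + 2 * B * δ := by
    rcases le_or_gt (1/2) r with h | h
    · nlinarith [mul_nonneg (sub_nonneg.2 huB) hδ0]
    · nlinarith [mul_nonneg hB0 (by rw [hδ]; linarith : (0:ℝ) ≤ 2 * δ - 1)]
  have hAC : A - C ≤ B * δ := by
    nlinarith [mul_nonneg (sub_nonneg.2 haB) hδ0]
  have hlb : A - B * δ ≤ φ := by
    nlinarith [mul_nonneg (sub_nonneg.2 haB) hδ0]
  rw [abs_le]
  constructor
  · nlinarith [mul_nonneg (sub_nonneg.2 hθ1) hδ0, mul_nonneg hθ0 hδ0,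
      mul_le_mul_of_nonneg_right hAC (sub_nonneg.2 hθ1),
      mul_nonneg (mul_nonneg hB0 hδ0) hθ0]
  · nlinarith [mul_nonneg (sub_nonneg.2 hθ1) hδ0, mul_nonneg hθ0 hδ0,
      mul_le_mul_of_nonneg_right hAC hθ0,
      mul_nonneg (mul_nonneg hB0 hδ0) (sub_nonneg.2 hθ1)]
/-! ### piecewise linear extension -/

lemma plExt_add (a b : ℕ → ℝ) (t : ℝ) :
    plExt (fun n => a n + b n) t = plExt a t + plExt b t := by
  simp only [plExt]; ring

lemma plExt_smul (c : ℝ) (a : ℕ → ℝ) (t : ℝ) :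
    plExt (fun n => c * a n) t = c * plExt a t := by
  simp only [plExt]; ring

lemma plExt_one (t : ℝ) : plExt (fun _ => (1:ℝ)) t = 1 := by
  simp [plExt]

lemma plExt_eq_comb (a : ℕ → ℝ) (t : ℝ) :
    plExt a t = (1 - (t - (⌊t⌋₊:ℝ))) * a ⌊t⌋₊ + (t - (⌊t⌋₊:ℝ)) * a (⌊t⌋₊ + 1) := by
  simp only [plExt]; ring

lemma plExt_abs_le {a : ℕ → ℝ} {M : ℝ} (h : ∀ n, |a n| ≤ M) {t : ℝ} (ht : 0 ≤ t) :
    |plExt a t| ≤ M := by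
  rw [plExt_eq_comb]
  set θ := t - (⌊t⌋₊:ℝ) with hθ
  have hθ0 : 0 ≤ θ := sub_nonneg.2 (Nat.floor_le ht)
  have hθ1 : θ < 1 := by
    rw [hθ]; have := Nat.lt_floor_add_one t; linarith
  have hM0 : 0 ≤ M := le_trans (abs_nonneg _) (h 0)
  calc |(1 - θ) * a ⌊t⌋₊ + θ * a (⌊t⌋₊ + 1)|
      ≤ |(1 - θ) * a ⌊t⌋₊| + |θ * a (⌊t⌋₊ + 1)| := abs_add_le _ _
    _ = (1 - θ) * |a ⌊t⌋₊| + θ * |a (⌊t⌋₊ + 1)| := by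
        rw [abs_mul, abs_mul, abs_of_nonneg (by linarith : (0:ℝ) ≤ 1 - θ), abs_of_nonneg hθ0]
    _ ≤ (1 - θ) * M + θ * M := by
        exact add_le_add (mul_le_mul_of_nonneg_left (h _) (by linarith))
          (mul_le_mul_of_nonneg_left (h _) hθ0)
    _ = M := by ring

lemma plExt_nonneg {a : ℕ → ℝ} (h : ∀ n, 0 ≤ a n) {t : ℝ} (ht : 0 ≤ t) :
    0 ≤ plExt a t := by
  rw [plExt_eq_comb]
  have hθ0 : 0 ≤ t - (⌊t⌋₊:ℝ) := sub_nonneg.2 (Nat.floor_le ht)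
  have hθ1 : t - (⌊t⌋₊:ℝ) < 1 := by have := Nat.lt_floor_add_one t; linarith
  have := h ⌊t⌋₊; have := h (⌊t⌋₊ + 1)
  nlinarith

lemma plExt_shift (a : ℕ → ℝ) {t : ℝ} (ht : 0 ≤ t) :
    plExt (fun n => a (n + 1)) t = plExt a (t + 1) := by
  simp only [plExt, Nat.floor_add_one ht]
  push_cast
  ring_nf

lemma plExt_continuous (a : ℕ → ℝ) : Continuous (plExt a) := by
  rw [continuous_iff_continuousAt]
  intro x
  rcases lt_or_ge x 1 with hx | hx
  · have hev : (fun t => a 0 + (a 1 - a 0) * t) =ᶠ[nhds x] plExt a := by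
      filter_upwards [Iio_mem_nhds hx] with t ht
      have h0 : ⌊t⌋₊ = 0 := Nat.floor_eq_zero.2 ht
      simp [plExt, h0]
    exact ContinuousAt.congr (by fun_prop) hev
  · have hx0 : (0:ℝ) ≤ x := le_trans zero_le_one hx
    rcases eq_or_lt_of_le (Nat.floor_le hx0) with heq | hlt
    · -- x is a natural number ≥ 1
      set n := ⌊x⌋₊ with hn
      have hn1 : 1 ≤ n := by
        rw [hn]; exact Nat.le_floor (by exact_mod_cast hx)
      obtain ⟨m, hm⟩ : ∃ m, n = m + 1 := ⟨n - 1, (Nat.succ_pred_eq_of_pos hn1).symm⟩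
      rw [continuousAt_iff_continuous_left_right]
      have hplx : plExt a x = a n := by
        simp only [plExt, ← hn]
        rw [← heq]
        ring
      constructor
      · -- left continuity
        have hxm : ((m:ℝ)) < x := by
          rw [← heq, hm]; push_cast; linarith
        have hxm1 : x = (m:ℝ) + 1 := by
          rw [← heq, hm]; push_cast; ring
        refine ContinuousWithinAt.congr_of_eventuallyEq
          (f := fun t => a m + (a (m+1) - a m) * (t - m))
          (Continuous.continuousWithinAt (by fun_prop)) ?_ ?_
        · filter_upwards [Ioc_mem_nhdsLE_of_mem (⟨hxm, le_rfl⟩ : x ∈ Ioc (m:ℝ) x)]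
            with t ht
          rcases eq_or_lt_of_le ht.2 with h | h
          · rw [h, hplx, hm, hxm1]
            push_cast
            ring
          · have hft : ⌊t⌋₊ = m := by
              rw [Nat.floor_eq_iff (le_trans (by positivity) ht.1.le)]
              constructor
              · exact ht.1.le
              · rw [← hxm1]; exact h
            simp [plExt, hft]
        · rw [hplx, hm, hxm1]; push_cast; ring
      · -- right continuity
        refine ContinuousWithinAt.congr_of_eventuallyEq
          (f := fun t => a n + (a (n+1) - a n) * (t - n))
          (Continuous.continuousWithinAt (by fun_prop)) ?_ ?_
        · filter_upwards [Ico_mem_nhdsGE_of_mem (⟨le_rfl, lt_add_one x⟩ : x ∈ Ico x (x+1))]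
            with t ht
          have hft : ⌊t⌋₊ = n := by
            rw [Nat.floor_eq_iff (le_trans hx0 ht.1)]
            exact ⟨heq.le.trans ht.1, by rw [heq]; exact ht.2⟩
          simp [plExt, hft]
        · rw [hplx, ← heq]; ring
    · -- x is strictly between naturals
      have hev : (fun t => a ⌊x⌋₊ + (a (⌊x⌋₊+1) - a ⌊x⌋₊) * (t - ⌊x⌋₊)) =ᶠ[nhds x] plExt a := by
        filter_upwards [Ioo_mem_nhds hlt (Nat.lt_floor_add_one x)] with t ht
        have hft : ⌊t⌋₊ = ⌊x⌋₊ := by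
          rw [Nat.floor_eq_iff (le_trans (by positivity) ht.1.le)]
          exact ⟨ht.1.le, ht.2⟩
        simp [plExt, hft]
      exact ContinuousAt.congr (by fun_prop) hev
/-! ### main constructions -/

def aSeq (ψ κ x : ℝ → ℝ) : ℕ → ℝ := fun n => phiW ψ x (κ n)

def rSeq (ψ κ : ℝ → ℝ) : ℕ → ℝ := fun n => ψ (κ n) / ψ (κ ((n:ℝ) + 1))

def eSeq (ψ κ x : ℝ → ℝ) (B : ℝ) : ℕ → ℝ :=
  fun n => (aSeq ψ κ x (n + 1) - aSeq ψ κ x n) + 4 * B * (1 - rSeq ψ κ n)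

def wSeq (ψ κ x : ℝ → ℝ) (B : ℝ) : ℕ → ℝ :=
  fun n => eSeq ψ κ x B n + eSeq ψ κ x B (n - 1)

def FF (ψ κ x : ℝ → ℝ) : ℝ → ℝ := fun t => phiW ψ x (κ (max t 1))

def HH (B : ℝ) : ℝ → ℝ := fun t => B * max (2 - t) 0

section Main

variable {ψ κ x : ℝ → ℝ} {B : ℝ}
variable (hψ : OmegaInf ψ) (hκ : MemK κ)
variable (hB : ∀ t > (0:ℝ), phiW ψ x t ≤ B) (hB0 : 0 ≤ B)

lemma cast_succ (n : ℕ) : ((n + 1 : ℕ) : ℝ) = (n : ℝ) + 1 := by push_cast; ring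

include hκ in
lemma aSeq_zero : aSeq ψ κ x 0 = 0 := by
  simp only [aSeq, Nat.cast_zero, hκ.2.1]
  exact phiW_zero ψ x

include hψ hκ hB hB0 in
lemma aSeq_mem (n : ℕ) : 0 ≤ aSeq ψ κ x n ∧ aSeq ψ κ x n ≤ B := by
  rcases Nat.eq_zero_or_pos n with h | h
  · rw [h, aSeq_zero hκ]; exact ⟨le_rfl, hB0⟩
  · have hn : (0:ℝ) < n := by exact_mod_cast h
    have hκn : 0 < κ n := kappa_pos hκ hn
    exact ⟨phiW_nonneg hψ x (kappa_nonneg hκ hn.le), hB (κ n) hκn⟩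

include hψ hκ in
lemma rSeq_mem (n : ℕ) : 0 ≤ rSeq ψ κ n ∧ rSeq ψ κ n ≤ 1 := by
  have h1 : (0:ℝ) ≤ n := Nat.cast_nonneg n
  have h2 : κ n ≤ κ ((n:ℝ) + 1) :=
    kappa_monoOn hκ (mem_Ici.2 h1) (mem_Ici.2 (by linarith)) (by linarith)
  have h3 : 0 < ψ (κ ((n:ℝ) + 1)) := psi_pos hψ (kappa_pos hκ (by linarith))
  have h4 : 0 ≤ ψ (κ n) := hψ.2.1 _ (mem_Ici.2 (kappa_nonneg hκ h1))
  have h5 : ψ (κ n) ≤ ψ (κ ((n:ℝ) + 1)) :=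
    psi_mono hψ (kappa_nonneg hκ h1) h2
  exact ⟨div_nonneg h4 h3.le, (div_le_one h3).2 h5⟩

include hψ hκ hB hB0 in
lemma aSeq_drop (n : ℕ) :
    aSeq ψ κ x n - aSeq ψ κ x (n + 1) ≤ B * (1 - rSeq ψ κ n) := by
  rcases Nat.eq_zero_or_pos n with h | h
  · rw [h, aSeq_zero hκ]
    have h1 := aSeq_mem hψ hκ hB hB0 (0 + 1)
    have h2 := rSeq_mem hψ hκ 0
    nlinarith
  · have hn : (0:ℝ) < n := by exact_mod_cast h
    have hp : 0 < κ n := kappa_pos hκ hn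
    have hq : κ n ≤ κ ((n:ℝ) + 1) :=
      kappa_monoOn hκ (mem_Ici.2 hn.le) (mem_Ici.2 (by linarith)) (by linarith)
    have hψp : 0 < ψ (κ n) := psi_pos hψ hp
    have hψq : 0 < ψ (κ ((n:ℝ) + 1)) := psi_pos hψ (lt_of_lt_of_le hp hq)
    have hψpq : ψ (κ n) ≤ ψ (κ ((n:ℝ) + 1)) := psi_mono hψ (kappa_nonneg hκ hn.le) hq
    have hI : IInt x (κ n) ≤ IInt x (κ ((n:ℝ) + 1)) :=
      IInt_monoOn x (mem_Ici.2 hp.le) (mem_Ici.2 (hp.le.trans hq)) hq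
    have hI0 : 0 ≤ IInt x (κ n) := IInt_nonneg x hp.le
    have key : aSeq ψ κ x n * rSeq ψ κ n ≤ aSeq ψ κ x (n + 1) := by
      have e1 : aSeq ψ κ x n * rSeq ψ κ n = IInt x (κ n) / ψ (κ ((n:ℝ) + 1)) := by
        simp only [aSeq, rSeq, phiW_eq]
        field_simp
      have e2 : IInt x (κ n) / ψ (κ ((n:ℝ) + 1)) ≤ aSeq ψ κ x (n + 1) := by
        rw [aSeq, phiW_eq, cast_succ]
        exact div_le_div₀ (IInt_nonneg x (hp.le.trans hq)) hI hψq le_rfl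
      rw [e1]; exact e2
    have haB := aSeq_mem hψ hκ hB hB0 n
    have hr := rSeq_mem hψ hκ n
    nlinarith

include hψ hκ hB hB0 in
lemma eSeq_nonneg (n : ℕ) : 0 ≤ eSeq ψ κ x B n := by
  have h1 := aSeq_drop hψ hκ hB hB0 n
  have h2 := rSeq_mem hψ hκ n
  simp only [eSeq]
  nlinarith

include hψ hκ hB hB0 in
lemma eSeq_le (n : ℕ) : eSeq ψ κ x B n ≤ 6 * B := by
  have h1 := aSeq_mem hψ hκ hB hB0 n
  have h2 := aSeq_mem hψ hκ hB hB0 (n + 1)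
  have h3 := rSeq_mem hψ hκ n
  simp only [eSeq]
  nlinarith

include hψ hκ hB hB0 in
lemma eSeq_bdd : IsBddSeq (eSeq ψ κ x B) := by
  refine ⟨6 * B, fun n => ?_⟩
  rw [abs_of_nonneg (eSeq_nonneg hψ hκ hB hB0 n)]
  exact eSeq_le hψ hκ hB hB0 n

include hψ hκ hB hB0 in
lemma wSeq_nonneg (n : ℕ) : 0 ≤ wSeq ψ κ x B n :=
  add_nonneg (eSeq_nonneg hψ hκ hB hB0 n) (eSeq_nonneg hψ hκ hB hB0 (n - 1))

include hψ hκ hB hB0 in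
lemma wSeq_bdd : IsBddSeq (wSeq ψ κ x B) := by
  refine ⟨12 * B, fun n => ?_⟩
  rw [abs_of_nonneg (wSeq_nonneg hψ hκ hB hB0 n)]
  have := eSeq_le hψ hκ hB hB0 n
  have := eSeq_le hψ hκ hB hB0 (n - 1)
  simp only [wSeq]
  linarith

include hψ hκ hB hB0 in
lemma aSeq_bdd : IsBddSeq (aSeq ψ κ x) := by
  refine ⟨B, fun n => ?_⟩
  have := aSeq_mem hψ hκ hB hB0 n
  rw [abs_of_nonneg this.1]
  exact this.2

include hψ hκ in
lemma rSeq_bdd : IsBddSeq (rSeq ψ κ) := by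
  refine ⟨1, fun n => ?_⟩
  have := rSeq_mem hψ hκ n
  rw [abs_of_nonneg this.1]
  exact this.2

end Main
section Main2

variable {ψ κ x : ℝ → ℝ} {B : ℝ}
variable (hψ : OmegaInf ψ) (hκ : MemK κ)
variable (hB : ∀ t > (0:ℝ), phiW ψ x t ≤ B) (hB0 : 0 ≤ B)

include hψ hκ hB hB0 in
lemma FF_mem (t : ℝ) : 0 ≤ FF ψ κ x t ∧ FF ψ κ x t ≤ B := by
  have h1 : (0:ℝ) < max t 1 := lt_of_lt_of_le zero_lt_one (le_max_right _ _)
  have h2 : 0 < κ (max t 1) := kappa_pos hκ h1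
  exact ⟨phiW_nonneg hψ x h2.le, hB _ h2⟩

include hψ hκ hB hB0 in
lemma FF_cb : IsCb (FF ψ κ x) := by
  constructor
  · have hk : ContinuousOn (fun t => κ (max t 1)) (Ici 0) := by
      refine (kappa_contOn hκ).comp ((continuous_id.max continuous_const).continuousOn) ?_
      intro t _
      exact mem_Ici.2 (le_trans zero_le_one (le_max_right _ _))
    have hdiv : ContinuousOn (fun v => IInt x v / ψ v) (Ici (κ 1)) := by
      have hκ1 : 0 < κ 1 := kappa_pos hκ zero_lt_one
      refine ContinuousOn.div ?_ ?_ ?_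
      · intro v hv
        exact (IInt_continuousAt x (lt_of_lt_of_le hκ1 hv)).continuousWithinAt
      · exact (psi_contOn hψ).mono (fun v hv => lt_of_lt_of_le hκ1 hv)
      · intro v hv
        exact ne_of_gt (psi_pos hψ (lt_of_lt_of_le hκ1 hv))
    refine hdiv.comp hk ?_
    intro t _
    refine mem_Ici.2 (kappa_monoOn hκ (mem_Ici.2 zero_le_one)
      (mem_Ici.2 (le_trans zero_le_one (le_max_right _ _))) (le_max_right _ _))
  · refine ⟨B, fun t _ => ?_⟩
    have := FF_mem hψ hκ hB hB0 t
    rw [abs_of_nonneg this.1]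
    exact this.2

include hB0 in
lemma HH_cb : IsCb (HH B) := by
  constructor
  · exact (continuous_const.mul ((continuous_const.sub continuous_id).max
      continuous_const)).continuousOn
  · refine ⟨2 * B, fun t ht => ?_⟩
    simp only [HH, mem_Ici] at *
    rw [abs_mul, abs_of_nonneg hB0, abs_of_nonneg (le_max_right _ _)]
    have : max (2 - t) 0 ≤ 2 := by
      rw [max_le_iff]; constructor <;> linarith
    nlinarith

lemma HH_tendsto : Tendsto (HH B) atTop (nhds 0) := by
  have hev : (fun _ : ℝ => (0:ℝ)) =ᶠ[atTop] HH B := by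
    filter_upwards [eventually_ge_atTop (2:ℝ)] with t ht
    simp only [HH]
    rw [max_eq_right (by linarith)]
    ring
  exact tendsto_const_nhds.congr' hev

include hψ hκ hB hB0 in
lemma main_ptwise (t : ℝ) (ht : 0 ≤ t) :
    |FF ψ κ x t - plExt (aSeq ψ κ x) t|
      ≤ plExt (wSeq ψ κ x B) t + HH B t := by
  rcases lt_or_ge t 1 with h1 | h1
  · -- t ∈ [0, 1)
    have hmax : max t 1 = 1 := max_eq_right h1.le
    have hfl : ⌊t⌋₊ = 0 := Nat.floor_eq_zero.2 h1
    have hFF : FF ψ κ x t = aSeq ψ κ x 1 := by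
      simp only [FF, hmax, aSeq, Nat.cast_one]
    have hpl : plExt (aSeq ψ κ x) t = aSeq ψ κ x 1 * t := by
      simp only [plExt, hfl, aSeq_zero hκ, Nat.cast_zero]
      ring
    have hG : 0 ≤ plExt (wSeq ψ κ x B) t :=
      plExt_nonneg (wSeq_nonneg hψ hκ hB hB0) ht
    have hH : HH B t = B * (2 - t) := by
      simp only [HH]
      rw [max_eq_left (by linarith)]
    have ha1 := aSeq_mem hψ hκ hB hB0 1
    rw [hFF, hpl, hH]
    rw [abs_of_nonneg (by nlinarith : (0:ℝ) ≤ aSeq ψ κ x 1 - aSeq ψ κ x 1 * t)]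
    nlinarith
  · -- t ≥ 1
    set n := ⌊t⌋₊ with hn
    have hn1 : 1 ≤ n := Nat.le_floor (by exact_mod_cast h1)
    have hnr : (1:ℝ) ≤ (n:ℝ) := by exact_mod_cast hn1
    have hnt : (n:ℝ) ≤ t := Nat.floor_le ht
    have htn : t < (n:ℝ) + 1 := Nat.lt_floor_add_one t
    have hmax : max t 1 = t := max_eq_left h1
    have hp : 0 < κ (n:ℝ) := kappa_pos hκ (by linarith)
    have hpu : κ (n:ℝ) ≤ κ t :=
      kappa_monoOn hκ (mem_Ici.2 (by linarith)) (mem_Ici.2 (by linarith)) hnt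
    have huq : κ t ≤ κ ((n:ℝ) + 1) :=
      kappa_monoOn hκ (mem_Ici.2 (by linarith)) (mem_Ici.2 (by linarith)) htn.le
    have hψp : 0 < ψ (κ (n:ℝ)) := psi_pos hψ hp
    have hψpu : ψ (κ (n:ℝ)) ≤ ψ (κ t) := psi_mono hψ hp.le hpu
    have hψuq : ψ (κ t) ≤ ψ (κ ((n:ℝ) + 1)) := psi_mono hψ (hp.le.trans hpu) huq
    have hIp : 0 ≤ IInt x (κ (n:ℝ)) := IInt_nonneg x hp.le
    have hIpu : IInt x (κ (n:ℝ)) ≤ IInt x (κ t) :=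
      IInt_monoOn x (mem_Ici.2 hp.le) (mem_Ici.2 (hp.le.trans hpu)) hpu
    have hIuq : IInt x (κ t) ≤ IInt x (κ ((n:ℝ) + 1)) :=
      IInt_monoOn x (mem_Ici.2 (hp.le.trans hpu))
        (mem_Ici.2 ((hp.le.trans hpu).trans huq)) huq
    have haB : IInt x (κ (n:ℝ)) / ψ (κ (n:ℝ)) ≤ B := by
      rw [← phiW_eq]; exact hB _ hp
    have hbB : IInt x (κ ((n:ℝ) + 1)) / ψ (κ ((n:ℝ) + 1)) ≤ B := by
      rw [← phiW_eq]; exact hB _ (lt_of_lt_of_le hp (hpu.trans huq))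
    have huB : IInt x (κ t) / ψ (κ t) ≤ B := by
      rw [← phiW_eq]; exact hB _ (lt_of_lt_of_le hp hpu)
    have hkey := key_ineq hψp hψpu hψuq hIp hIpu hIuq haB hbB huB hB0
      (sub_nonneg.2 hnt) (by linarith : t - (n:ℝ) ≤ 1)
    have hFF : FF ψ κ x t = IInt x (κ t) / ψ (κ t) := by
      simp only [FF, hmax, phiW_eq]
    have hanp : aSeq ψ κ x n = IInt x (κ (n:ℝ)) / ψ (κ (n:ℝ)) := rfl
    have hanq : aSeq ψ κ x (n + 1) = IInt x (κ ((n:ℝ) + 1)) / ψ (κ ((n:ℝ) + 1)) := by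
      rw [aSeq, phiW_eq, cast_succ]
    have hpl : plExt (aSeq ψ κ x) t
        = aSeq ψ κ x n + (aSeq ψ κ x (n + 1) - aSeq ψ κ x n) * (t - (n:ℝ)) := by
      simp only [plExt, ← hn]
    have heS : eSeq ψ κ x B n
        = (aSeq ψ κ x (n + 1) - aSeq ψ κ x n) + 4 * B * (1 - ψ (κ (n:ℝ)) / ψ (κ ((n:ℝ) + 1))) :=
      rfl
    have herr : |FF ψ κ x t - plExt (aSeq ψ κ x) t| ≤ eSeq ψ κ x B n := by
      rw [hFF, hpl, hanp, hanq, heS, hanp, hanq]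
      exact hkey
    have hGe : eSeq ψ κ x B n ≤ plExt (wSeq ψ κ x B) t := by
      have hplw : plExt (wSeq ψ κ x B) t
          = wSeq ψ κ x B n + (wSeq ψ κ x B (n + 1) - wSeq ψ κ x B n) * (t - (n:ℝ)) := by
        simp only [plExt, ← hn]
      rw [hplw]
      have hw1 : eSeq ψ κ x B n ≤ wSeq ψ κ x B n := by
        simp only [wSeq]
        have := eSeq_nonneg hψ hκ hB hB0 (n - 1)
        linarith
      have hw2 : eSeq ψ κ x B n ≤ wSeq ψ κ x B (n + 1) := by
        simp only [wSeq, Nat.add_sub_cancel]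
        have := eSeq_nonneg hψ hκ hB hB0 (n + 1)
        linarith
      have hθ0 : 0 ≤ t - (n:ℝ) := sub_nonneg.2 hnt
      have hθ1 : t - (n:ℝ) ≤ 1 := by linarith
      nlinarith
    have hH : 0 ≤ HH B t := mul_nonneg hB0 (le_max_right _ _)
    linarith

end Main2
lemma IsBddSeq.comp {a : ℕ → ℝ} (ha : IsBddSeq a) (g : ℕ → ℕ) :
    IsBddSeq (fun n => a (g n)) := by
  obtain ⟨M, hM⟩ := ha
  exact ⟨M, fun n => hM (g n)⟩

lemma plExt_cb {a : ℕ → ℝ} (ha : IsBddSeq a) : IsCb (plExt a) := by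
  obtain ⟨M, hM⟩ := ha
  exact ⟨(plExt_continuous a).continuousOn, M, fun t ht => plExt_abs_le hM ht⟩

lemma BanachLimitN.map_one_sub (L : BanachLimitN) {r : ℕ → ℝ} (hr : IsBddSeq r) :
    L.toFun (fun n => 1 - r n) = 1 - L.toFun r := by
  rw [show (fun n => (1:ℝ) - r n) = (fun n => (fun _ : ℕ => (1:ℝ)) n + (-1) * r n)
    from funext fun n => by ring]
  rw [L.map_add _ _ (IsBddSeq.const 1) (hr.cmul (-1)), L.map_one, L.map_smul (-1) r hr]
  ring

/-- The Banach limit on `ℓ∞(ℕ)` induced by a Banach limit on `C_b([0,∞))` via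
piecewise linear extension. -/
def LNofLR (L : BanachLimitR) : BanachLimitN where
  toFun a := L.toFun (plExt a)
  map_add a b ha hb := by
    show L.toFun (plExt fun n => a n + b n) = L.toFun (plExt a) + L.toFun (plExt b)
    rw [show plExt (fun n => a n + b n) = fun t => plExt a t + plExt b t
      from funext (plExt_add a b)]
    exact L.map_add _ _ (plExt_cb ha) (plExt_cb hb)
  map_smul c a ha := by
    show L.toFun (plExt fun n => c * a n) = c * L.toFun (plExt a)
    rw [show plExt (fun n => c * a n) = fun t => c * plExt a t
      from funext (plExt_smul c a)]
    exact L.map_smul c _ (plExt_cb ha)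
  pos a ha hpos := L.pos _ (plExt_cb ha) (fun t ht => plExt_nonneg hpos ht)
  map_one := by
    show L.toFun (plExt fun _ => (1:ℝ)) = 1
    rw [show plExt (fun _ => (1:ℝ)) = fun _ => (1:ℝ) from funext plExt_one]
    exact L.map_one
  shift_inv a ha := by
    show L.toFun (plExt fun n => a (n + 1)) = L.toFun (plExt a)
    have h1 : L.toFun (plExt fun n => a (n + 1)) = L.toFun (fun t => plExt a (t + 1)) :=
      L.congr_Ici (plExt_cb (ha.shift 1)) ((plExt_cb ha).shift zero_le_one)
        (fun t ht => plExt_shift a ht)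
    rw [h1]
    exact L.shift_inv (plExt a) (plExt_cb ha) 1 zero_le_one

section Dir1

variable {ψ κ x : ℝ → ℝ} {B : ℝ}
variable (hψ : OmegaInf ψ) (hκ : MemK κ) (hR : RestrictedGrowth ψ κ)
variable (hB : ∀ t > (0:ℝ), phiW ψ x t ≤ B) (hB0 : 0 ≤ B)

include hψ hκ hR hB hB0 in
lemma LN_w_zero (L' : BanachLimitN) : L'.toFun (wSeq ψ κ x B) = 0 := by
  have hebdd : IsBddSeq (eSeq ψ κ x B) := eSeq_bdd hψ hκ hB hB0
  have hepbdd : IsBddSeq (fun n => eSeq ψ κ x B (n - 1)) := hebdd.comp (fun n => n - 1)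
  have he0 : L'.toFun (eSeq ψ κ x B) = 0 := by
    have hd : L'.toFun (fun n => aSeq ψ κ x (n + 1) - aSeq ψ κ x n) = 0 :=
      L'.map_shift_sub (aSeq_bdd hψ hκ hB hB0)
    have hrb : IsBddSeq (rSeq ψ κ) := rSeq_bdd hψ hκ
    have hr1 : L'.toFun (fun n => 1 - rSeq ψ κ n) = 0 := by
      rw [L'.map_one_sub hrb]
      have := hR L'
      rw [show (fun n : ℕ => ψ (κ n) / ψ (κ ((n:ℝ) + 1))) = rSeq ψ κ from rfl] at this
      rw [this]; ring
    have hg : L'.toFun (fun n => 4 * B * (1 - rSeq ψ κ n)) = 0 := by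
      rw [show (fun n => 4 * B * (1 - rSeq ψ κ n))
        = (fun n => (4 * B) * ((fun m => 1 - rSeq ψ κ m) n)) from rfl]
      rw [L'.map_smul (4 * B) _ ((IsBddSeq.const 1).sub' hrb)]
      rw [hr1]; ring
    have := L'.map_add (fun n => aSeq ψ κ x (n + 1) - aSeq ψ κ x n)
      (fun n => 4 * B * (1 - rSeq ψ κ n))
      ((aSeq_bdd hψ hκ hB hB0).shift 1 |>.sub' (aSeq_bdd hψ hκ hB hB0))
      (IsBddSeq.cmul (4 * B) ((IsBddSeq.const 1).sub' (rSeq_bdd hψ hκ)))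
    rw [show eSeq ψ κ x B = (fun n => (aSeq ψ κ x (n + 1) - aSeq ψ κ x n)
      + 4 * B * (1 - rSeq ψ κ n)) from rfl]
    rw [this, hd, hg]; ring
  have hep : L'.toFun (fun n => eSeq ψ κ x B (n - 1)) = L'.toFun (eSeq ψ κ x B) := by
    have := L'.shift_inv (fun n => eSeq ψ κ x B (n - 1)) hepbdd
    simp only [Nat.add_sub_cancel] at this
    exact this.symm
  have := L'.map_add (eSeq ψ κ x B) (fun n => eSeq ψ κ x B (n - 1)) hebdd hepbdd
  rw [show wSeq ψ κ x B = (fun n => eSeq ψ κ x B n + (fun m => eSeq ψ κ x B (m - 1)) n)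
    from rfl]
  rw [this, he0, hep, he0]; ring

include hψ hκ hR hB hB0 in
lemma dir1_eq (L : BanachLimitR) :
    L.toFun (FF ψ κ x) = L.toFun (plExt (aSeq ψ κ x)) := by
  have hFcb : IsCb (FF ψ κ x) := FF_cb hψ hκ hB hB0
  have hacb : IsCb (plExt (aSeq ψ κ x)) := plExt_cb (aSeq_bdd hψ hκ hB hB0)
  have hwcb : IsCb (plExt (wSeq ψ κ x B)) := plExt_cb (wSeq_bdd hψ hκ hB hB0)
  have hHcb : IsCb (HH B) := HH_cb hB0
  have hclose := L.close hFcb hacb (hwcb.add' hHcb)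
    (fun t ht => main_ptwise hψ hκ hB hB0 t ht)
  have hsum : L.toFun (fun t => plExt (wSeq ψ κ x B) t + HH B t)
      = L.toFun (plExt (wSeq ψ κ x B)) + L.toFun (HH B) :=
    L.map_add _ _ hwcb hHcb
  have hH0 : L.toFun (HH B) = 0 := L.map_vanish hHcb HH_tendsto
  have hw0 : L.toFun (plExt (wSeq ψ κ x B)) = 0 :=
    LN_w_zero hψ hκ hR hB hB0 (LNofLR L)
  rw [hsum, hH0, hw0] at hclose
  have : |L.toFun (FF ψ κ x) - L.toFun (plExt (aSeq ψ κ x))| ≤ 0 := by linarith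
  have := abs_eq_zero.1 (le_antisymm this (abs_nonneg _))
  linarith

end Dir1
lemma cb_intervalIntegrable {f : ℝ → ℝ} (hf : IsCb f) {a b : ℝ} (ha : 0 ≤ a) (hb : 0 ≤ b) :
    IntervalIntegrable f volume a b := by
  refine (hf.1.mono ?_).intervalIntegrable
  intro t ht
  exact le_trans (le_min ha hb) ht.1

lemma cb_integral_abs_le {f : ℝ → ℝ} {M : ℝ} (hM : ∀ t ∈ Ici (0:ℝ), |f t| ≤ M)
    {a b : ℝ} (ha : 0 ≤ a) (hab : a ≤ b) :
    |∫ s in a..b, f s| ≤ M * (b - a) := by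
  have h := intervalIntegral.norm_integral_le_of_norm_le_const
    (C := M) (f := f) (a := a) (b := b) (fun u hu => by
      rw [uIoc_of_le hab] at hu
      exact hM u (mem_Ici.2 (le_trans ha hu.1.le)))
  rw [Real.norm_eq_abs] at h
  rwa [abs_of_nonneg (by linarith : (0:ℝ) ≤ b - a)] at h

lemma cb_seq_bdd {f : ℝ → ℝ} (hf : IsCb f) :
    IsBddSeq (fun n : ℕ => ∫ s in (n:ℝ)..((n:ℝ)+1), f s) := by
  obtain ⟨M, hM⟩ := hf.2
  refine ⟨M, fun n => ?_⟩
  have := cb_integral_abs_le hM (Nat.cast_nonneg n) (by linarith : (n:ℝ) ≤ (n:ℝ)+1)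
  simpa using this

/-- The Banach limit on `C_b([0,∞))` induced by a Banach limit on `ℓ∞(ℕ)` via
integral averages over `[n, n+1]`. -/
def LRofLN (L' : BanachLimitN) : BanachLimitR where
  toFun f := L'.toFun (fun n => ∫ s in (n:ℝ)..((n:ℝ)+1), f s)
  map_add f g hf hg := by
    show L'.toFun (fun n => ∫ s in (n:ℝ)..((n:ℝ)+1), (f s + g s)) = _
    have hfe : (fun n : ℕ => ∫ s in (n:ℝ)..((n:ℝ)+1), (f s + g s))
        = fun n : ℕ => (∫ s in (n:ℝ)..((n:ℝ)+1), f s) + (∫ s in (n:ℝ)..((n:ℝ)+1), g s) := by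
      funext n
      exact intervalIntegral.integral_add
        (cb_intervalIntegrable hf (Nat.cast_nonneg n) (by linarith [Nat.cast_nonneg (α := ℝ) n]))
        (cb_intervalIntegrable hg (Nat.cast_nonneg n) (by linarith [Nat.cast_nonneg (α := ℝ) n]))
    rw [hfe]
    exact L'.map_add _ _ (cb_seq_bdd hf) (cb_seq_bdd hg)
  map_smul c f hf := by
    show L'.toFun (fun n => ∫ s in (n:ℝ)..((n:ℝ)+1), c * f s) = _
    have hfe : (fun n : ℕ => ∫ s in (n:ℝ)..((n:ℝ)+1), c * f s)
        = fun n : ℕ => c * (∫ s in (n:ℝ)..((n:ℝ)+1), f s) := by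
      funext n
      exact intervalIntegral.integral_const_mul c f
    rw [hfe]
    exact L'.map_smul c _ (cb_seq_bdd hf)
  pos f hf hpos := by
    refine L'.pos _ (cb_seq_bdd hf) (fun n => ?_)
    refine intervalIntegral.integral_nonneg (by linarith [Nat.cast_nonneg (α := ℝ) n]) ?_
    intro u hu
    exact hpos u (mem_Ici.2 (le_trans (Nat.cast_nonneg n) hu.1))
  map_one := by
    show L'.toFun (fun n : ℕ => ∫ _ in (n:ℝ)..((n:ℝ)+1), (1:ℝ)) = 1
    have hfe : (fun n : ℕ => ∫ _ in (n:ℝ)..((n:ℝ)+1), (1:ℝ)) = fun _ => (1:ℝ) := by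
      funext n
      rw [intervalIntegral.integral_const]
      simp
    rw [hfe]
    exact L'.map_one
  shift_inv f hf s hs := by
    show L'.toFun (fun n => ∫ u in (n:ℝ)..((n:ℝ)+1), f (u + s)) = _
    have hint : ∀ a b : ℝ, 0 ≤ a → 0 ≤ b → IntervalIntegrable f volume a b :=
      fun a b ha hb => cb_intervalIntegrable hf ha hb
    set G : ℕ → ℝ := fun n => ∫ u in (n:ℝ)..((n:ℝ)+s), f u with hG
    have hGbdd : IsBddSeq G := by
      obtain ⟨M, hM⟩ := hf.2
      refine ⟨M * s, fun n => ?_⟩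
      have := cb_integral_abs_le hM (Nat.cast_nonneg n)
        (by linarith [Nat.cast_nonneg (α := ℝ) n] : (n:ℝ) ≤ (n:ℝ)+s)
      simpa using this
    have hfe : (fun n : ℕ => ∫ u in (n:ℝ)..((n:ℝ)+1), f (u + s))
        = fun n : ℕ => (∫ u in (n:ℝ)..((n:ℝ)+1), f u) + (G (n+1) - G n) := by
      funext n
      have hn0 : (0:ℝ) ≤ (n:ℝ) := Nat.cast_nonneg n
      rw [intervalIntegral.integral_comp_add_right f s]
      have e1 : (∫ u in (n:ℝ)..((n:ℝ)+s), f u) + (∫ u in ((n:ℝ)+s)..((n:ℝ)+1+s), f u)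
          = ∫ u in (n:ℝ)..((n:ℝ)+1+s), f u :=
        intervalIntegral.integral_add_adjacent_intervals
          (hint _ _ hn0 (by linarith)) (hint _ _ (by linarith) (by linarith))
      have e2 : (∫ u in (n:ℝ)..((n:ℝ)+1), f u) + (∫ u in ((n:ℝ)+1)..((n:ℝ)+1+s), f u)
          = ∫ u in (n:ℝ)..((n:ℝ)+1+s), f u :=
        intervalIntegral.integral_add_adjacent_intervals
          (hint _ _ hn0 (by linarith)) (hint _ _ (by linarith) (by linarith))
      have hG1 : G (n+1) = ∫ u in ((n:ℝ)+1)..((n:ℝ)+1+s), f u := by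
        rw [hG]
        simp only [cast_succ]
      have hG0 : G n = ∫ u in (n:ℝ)..((n:ℝ)+s), f u := rfl
      rw [hG1, hG0]
      have : ((n:ℝ)+s) = (n:ℝ)+s := rfl
      linarith [e1, e2]
    rw [hfe]
    have hseqb : IsBddSeq (fun n : ℕ => ∫ u in (n:ℝ)..((n:ℝ)+1), f u) := cb_seq_bdd hf
    have hdb : IsBddSeq (fun n => G (n+1) - G n) := (hGbdd.shift 1).sub' hGbdd
    have := L'.map_add _ _ hseqb hdb
    rw [this, L'.map_shift_sub hGbdd]
    ring
section Dir2

variable {ψ κ x : ℝ → ℝ} {B : ℝ}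
variable (hψ : OmegaInf ψ) (hκ : MemK κ) (hR : RestrictedGrowth ψ κ)
variable (hB : ∀ t > (0:ℝ), phiW ψ x t ≤ B) (hB0 : 0 ≤ B)

lemma plExt_nat (a : ℕ → ℝ) (n : ℕ) : plExt a ((n:ℝ)) = a n := by
  simp [plExt]

include hψ hκ hB hB0 in
lemma plExt_w_bound (n : ℕ) : ∀ t ∈ Set.Ioc ((n:ℝ)) ((n:ℝ)+1),
    plExt (wSeq ψ κ x B) t ≤ wSeq ψ κ x B n + wSeq ψ κ x B (n+1) := by
  intro t ht
  have hw0 := wSeq_nonneg hψ hκ hB hB0 n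
  have hw1 := wSeq_nonneg hψ hκ hB hB0 (n+1)
  rcases eq_or_lt_of_le ht.2 with h | h
  · rw [h, show ((n:ℝ)+1) = ((n+1:ℕ):ℝ) from (cast_succ n).symm, plExt_nat]
    linarith
  · have hfl : ⌊t⌋₊ = n := by
      rw [Nat.floor_eq_iff (le_trans (Nat.cast_nonneg n) ht.1.le)]
      exact ⟨ht.1.le, h⟩
    have hpl : plExt (wSeq ψ κ x B) t
        = wSeq ψ κ x B n + (wSeq ψ κ x B (n+1) - wSeq ψ κ x B n) * (t - (n:ℝ)) := by
      simp only [plExt, hfl]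
    rw [hpl]
    have hθ0 : 0 ≤ t - (n:ℝ) := by linarith [ht.1]
    have hθ1 : t - (n:ℝ) ≤ 1 := by linarith
    nlinarith

include hψ hκ hB hB0 in
lemma c2_val (n : ℕ) :
    (∫ s in (n:ℝ)..((n:ℝ)+1), plExt (aSeq ψ κ x) s)
      = (aSeq ψ κ x n + aSeq ψ κ x (n+1)) / 2 := by
  set a := aSeq ψ κ x with ha
  have heqOn : EqOn (plExt a) (fun t => a n + (a (n+1) - a n) * (t - (n:ℝ)))
      (uIcc (n:ℝ) ((n:ℝ)+1)) := by
    intro t ht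
    rw [uIcc_of_le (by linarith)] at ht
    rcases eq_or_lt_of_le ht.2 with h | h
    · rw [h, show ((n:ℝ)+1) = ((n+1:ℕ):ℝ) from (cast_succ n).symm, plExt_nat]
      push_cast
      ring
    · have hfl : ⌊t⌋₊ = n := by
        rw [Nat.floor_eq_iff (le_trans (Nat.cast_nonneg n) ht.1)]
        exact ⟨ht.1, h⟩
      simp only [plExt, hfl]
  rw [intervalIntegral.integral_congr heqOn]
  rw [intervalIntegral.integral_add (f := fun _ => a n)
    (g := fun t => (a (n+1) - a n) * (t - (n:ℝ))) intervalIntegrable_const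
    ((by fun_prop : Continuous fun t : ℝ => (a (n+1) - a n) * (t - (n:ℝ))).intervalIntegrable _ _)]
  rw [intervalIntegral.integral_const]
  rw [intervalIntegral.integral_const_mul]
  have hhalf : (∫ t in (n:ℝ)..((n:ℝ)+1), (t - (n:ℝ))) = 1/2 := by
    rw [intervalIntegral.integral_sub intervalIntegral.intervalIntegrable_id
      intervalIntegrable_const]
    rw [integral_id, intervalIntegral.integral_const, smul_eq_mul]
    push_cast
    ring
  rw [hhalf]
  simp
  ring

include hψ hκ hR hB hB0 in
lemma dir2_eq (L' : BanachLimitN) :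
    (LRofLN L').toFun (FF ψ κ x) = L'.toFun (aSeq ψ κ x) := by
  have hFcb : IsCb (FF ψ κ x) := FF_cb hψ hκ hB hB0
  have habdd : IsBddSeq (aSeq ψ κ x) := aSeq_bdd hψ hκ hB hB0
  have hacb : IsCb (plExt (aSeq ψ κ x)) := plExt_cb habdd
  have hwbdd : IsBddSeq (wSeq ψ κ x B) := wSeq_bdd hψ hκ hB hB0
  set a := aSeq ψ κ x with ha
  set w := wSeq ψ κ x B with hw
  set c1 : ℕ → ℝ := fun n => ∫ s in (n:ℝ)..((n:ℝ)+1), FF ψ κ x s with hc1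
  set c2 : ℕ → ℝ := fun n => ∫ s in (n:ℝ)..((n:ℝ)+1), plExt a s with hc2
  have hLF : (LRofLN L').toFun (FF ψ κ x) = L'.toFun c1 := rfl
  set uSeq : ℕ → ℝ := fun n => w n + w (n+1) + HH B ((n:ℕ):ℝ) with hu
  have hdiff : ∀ n, |c1 n - c2 n| ≤ uSeq n := by
    intro n
    have hn0 : (0:ℝ) ≤ (n:ℝ) := Nat.cast_nonneg n
    have hint1 : IntervalIntegrable (FF ψ κ x) volume (n:ℝ) ((n:ℝ)+1) :=
      cb_intervalIntegrable hFcb hn0 (by linarith)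
    have hint2 : IntervalIntegrable (plExt a) volume (n:ℝ) ((n:ℝ)+1) :=
      cb_intervalIntegrable hacb hn0 (by linarith)
    have hsub : c1 n - c2 n = ∫ s in (n:ℝ)..((n:ℝ)+1), (FF ψ κ x s - plExt a s) :=
      (intervalIntegral.integral_sub hint1 hint2).symm
    rw [hsub]
    have hb := intervalIntegral.norm_integral_le_of_norm_le_const
      (C := uSeq n) (f := fun s => FF ψ κ x s - plExt a s)
      (a := (n:ℝ)) (b := (n:ℝ)+1) (fun u hu' => by
        rw [uIoc_of_le (by linarith : (n:ℝ) ≤ (n:ℝ)+1)] at hu'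
        have h1 := main_ptwise hψ hκ hB hB0 u (le_trans hn0 hu'.1.le)
        have h2 := plExt_w_bound hψ hκ hB hB0 n u hu'
        have h3 : HH B u ≤ HH B ((n:ℕ):ℝ) := by
          simp only [HH]
          refine mul_le_mul_of_nonneg_left (max_le_max (by linarith [hu'.1.le]) le_rfl) hB0
        rw [Real.norm_eq_abs]
        calc |FF ψ κ x u - plExt a u| ≤ plExt w u + HH B u := h1
          _ ≤ uSeq n := by rw [hu]; dsimp only; linarith)
    rw [Real.norm_eq_abs] at hb
    calc |∫ s in (n:ℝ)..((n:ℝ)+1), (FF ψ κ x s - plExt a s)|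
        ≤ uSeq n * |((n:ℝ)+1) - (n:ℝ)| := hb
      _ = uSeq n := by simp
  have hc1b : IsBddSeq c1 := cb_seq_bdd hFcb
  have hc2b : IsBddSeq c2 := cb_seq_bdd hacb
  have hhbdd : IsBddSeq (fun n : ℕ => HH B ((n:ℕ):ℝ)) := by
    obtain ⟨M, hM⟩ := (HH_cb hB0).2
    exact ⟨M, fun n => hM _ (mem_Ici.2 (Nat.cast_nonneg n))⟩
  have hub : IsBddSeq uSeq := (hwbdd.add' (hwbdd.shift 1)).add' hhbdd
  have hclose := L'.close hc1b hc2b hub hdiff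
  have hu0 : L'.toFun uSeq = 0 := by
    have hw0 : L'.toFun w = 0 := LN_w_zero hψ hκ hR hB hB0 L'
    have hwsucc : L'.toFun (fun n => w (n+1)) = L'.toFun w := L'.shift_inv w hwbdd
    have hh0 : L'.toFun (fun n : ℕ => HH B ((n:ℕ):ℝ)) = 0 := by
      refine L'.map_null hhbdd ?_
      have hev : (fun _ : ℕ => (0:ℝ)) =ᶠ[atTop] (fun n : ℕ => HH B ((n:ℕ):ℝ)) := by
        filter_upwards [eventually_ge_atTop 2] with n hn
        have : ((2:ℝ)) ≤ (n:ℝ) := by exact_mod_cast hn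
        simp only [HH]
        rw [max_eq_right (by linarith)]
        ring
      exact tendsto_const_nhds.congr' hev
    have e2 := L'.map_add w (fun n => w (n+1)) hwbdd (hwbdd.shift 1)
    have e1 := L'.map_add (fun n => w n + w (n+1)) (fun n : ℕ => HH B ((n:ℕ):ℝ))
      (hwbdd.add' (hwbdd.shift 1)) hhbdd
    calc L'.toFun uSeq
        = L'.toFun (fun n => w n + w (n+1)) + L'.toFun (fun n : ℕ => HH B ((n:ℕ):ℝ)) := e1
      _ = (L'.toFun w + L'.toFun (fun n => w (n+1))) + 0 := by rw [e2, hh0]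
      _ = 0 := by rw [hwsucc, hw0]; ring
  have hc1c2 : L'.toFun c1 = L'.toFun c2 := by
    rw [hu0] at hclose
    have h0 := abs_nonneg (L'.toFun c1 - L'.toFun c2)
    have := abs_eq_zero.1 (le_antisymm hclose h0)
    linarith
  have hc2L : L'.toFun c2 = L'.toFun a := by
    have hc2eq : c2 = fun n => (1/2) * (a n + a (n+1)) := by
      funext n
      rw [hc2]
      dsimp only
      rw [c2_val hψ hκ hB hB0 n, ← ha]
      ring
    rw [hc2eq]
    rw [L'.map_smul (1/2) _ (habdd.add' (habdd.shift 1))]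
    rw [L'.map_add a (fun n => a (n+1)) habdd (habdd.shift 1)]
    rw [L'.shift_inv a habdd]
    ring
  rw [hLF, hc1c2, hc2L]

end Dir2
/-- for `κ ∈ R(ψ)` the families `{f_{L,κ} : L ∈ BL(ℝ₊)}` and
`{f_{L',κ} : L' ∈ BL(ℕ)}` coincide as functionals on `M₊(ψ)`. -/
theorem fL_eq_fLN_families (ψ κ : ℝ → ℝ) (hψ : OmegaInf ψ) (hκ : MemK κ)
    (hR : RestrictedGrowth ψ κ) :
    (∀ L : BanachLimitR, ∃ L' : BanachLimitN,
      ∀ x : ℝ → ℝ, MemMplus ψ x → fL L ψ κ x = fLN L' ψ κ x) ∧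
    (∀ L' : BanachLimitN, ∃ L : BanachLimitR,
      ∀ x : ℝ → ℝ, MemMplus ψ x → fL L ψ κ x = fLN L' ψ κ x) := by
  constructor
  · intro L
    refine ⟨LNofLR L, fun x hx => ?_⟩
    obtain ⟨⟨hxm, M, hM⟩, -⟩ := hx
    have hB : ∀ t > (0:ℝ), phiW ψ x t ≤ max M 0 := fun t ht =>
      le_trans (hM t ht) (le_max_left _ _)
    have hB0 : (0:ℝ) ≤ max M 0 := le_max_right _ _
    exact dir1_eq hψ hκ hR hB hB0 L
  · intro L'
    refine ⟨LRofLN L', fun x hx => ?_⟩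
    obtain ⟨⟨hxm, M, hM⟩, -⟩ := hx
    have hB : ∀ t > (0:ℝ), phiW ψ x t ≤ max M 0 := fun t ht =>
      le_trans (hM t ht) (le_max_left _ _)
    have hB0 : (0:ℝ) ≤ max M 0 := le_max_right _ _
    exact dir2_eq hψ hκ hR hB hB0 L'
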